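/- arXiv:2307.10276 — 2 statements merged into one kernel-verified Lean document; each statement's English description precedes it below -/
import Mathlib

section
/- Under the alternative hypothesis θ₀ ≠ κ(μ₀), the test based on T_n is consistent: for every real constant c (in particular for c equal to the upper φ-quantile of the chi-square distribution with p+1 degrees of freedom), P(T_n ≥ c) → 1 as n → ∞. -/
open MeasureTheory ProbabilityTheory Filter Topology Matrix

/-- Convergence in distribution of a sequence of `E`-valued random elements to the law `ν`,
expressed through bounded continuous test functions. -/
def TendstoInDistribution {Ω E : Type*} [MeasurableSpace Ω] [TopologicalSpace E]
    [MeasurableSpace E] (P : Measure Ω) (X : ℕ → Ω → E) (ν : Measure E) : Prop :=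
  ∀ f : BoundedContinuousFunction E ℝ,
    Tendsto (fun n => ∫ ω, f (X n ω) ∂P) atTop (𝓝 (∫ x, f x ∂ν))

/-- `ν` is the centered Gaussian law on `ι → ℝ` with covariance matrix `C`, characterized
via one-dimensional projections (Cramér–Wold). -/
def IsCenteredGaussianLaw {ι : Type*} [Fintype ι] (ν : Measure (ι → ℝ))
    (C : Matrix ι ι ℝ) : Prop :=
  IsProbabilityMeasure ν ∧
    ∀ a : ι → ℝ, ν.map (fun x => ∑ i, a i * x i) =
      ProbabilityTheory.gaussianReal 0 (Real.toNNReal (a ⬝ᵥ C *ᵥ a))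

/-- The chi-square distribution with `k` degrees of freedom: the law of the sum of squares
of `k` independent standard normal random variables. -/
noncomputable def chiSquareLaw (k : ℕ) : Measure ℝ :=
  Measure.map (fun x : Fin k → ℝ => ∑ i, (x i) ^ 2)
    (Measure.pi fun _ : Fin k => ProbabilityTheory.gaussianReal 0 1)

lemma aux_W_posdef {n : Type*} [Fintype n] [DecidableEq n]
    (V : Matrix (n ⊕ n) (n ⊕ n) ℝ) (hV : V.PosDef)
    (K : Matrix n n ℝ) (hKsymm : Kᵀ = K) :
    (K * V.toBlocks₁₁ * K - K * V.toBlocks₁₂ - V.toBlocks₂₁ * K + V.toBlocks₂₂).PosDef := by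
  set L : Matrix n (n ⊕ n) ℝ := fromCols K (-1) with hL
  have hLT : Lᵀ = fromRows K (-1) := by
    rw [hL, transpose_fromCols, hKsymm, transpose_neg, transpose_one]
  have hLH : Lᴴ = Lᵀ := by
    ext i j; simp [conjTranspose_apply]
  have key : K * V.toBlocks₁₁ * K - K * V.toBlocks₁₂ - V.toBlocks₂₁ * K + V.toBlocks₂₂
      = L * V * Lᴴ := by
    rw [hLH, hLT, hL]
    conv_rhs => rw [← fromBlocks_toBlocks V, fromCols_mul_fromBlocks,
      fromCols_mul_fromRows]
    noncomm_ring
  rw [key]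
  refine PosDef.of_dotProduct_mulVec_pos ?_ ?_
  · exact isHermitian_mul_mul_conjTranspose L hV.1
  · intro x hx
    have hy : Lᴴ *ᵥ x ≠ 0 := by
      rw [hLH, hLT, fromRows_mulVec]
      intro h
      apply hx
      have := congrArg (fun f => fun j => f (Sum.inr j)) h
      simpa using congrFun this |> fun h2 => funext fun j => by
        have := h2 j
        simpa [neg_mulVec, one_mulVec] using this
    have := hV.dotProduct_mulVec_pos hy
    simpa only [star_mulVec, dotProduct_mulVec, vecMul_vecMul, Matrix.mul_assoc, conjTranspose_conjTranspose] using this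


/-- Under the alternative hypothesis `θ₀ ≠ κ(μ₀)`, the test based on
`T_n = n (κ(μ̂_n) − θ̂_n)ᵀ Ŵ_n⁻¹ (κ(μ̂_n) − θ̂_n)` is consistent: for every real constant `c`,
`P(T_n ≥ c) → 1` as `n → ∞`. -/
theorem stmt_1
    {Ω : Type*} [MeasurableSpace Ω] (P : Measure Ω) [IsProbabilityMeasure P]
    (p : ℕ) (hp : 1 ≤ p)
    (μ₀ θ₀ : Fin (p + 1) → ℝ)
    (muHat thetaHat : ℕ → Ω → Fin (p + 1) → ℝ)
    (hmuMeas : ∀ n, Measurable (muHat n)) (hthetaMeas : ∀ n, Measurable (thetaHat n))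
    -- strong consistency of the estimators
    (hcons : ∀ᵐ ω ∂P, Tendsto (fun n => muHat n ω) atTop (𝓝 μ₀) ∧
      Tendsto (fun n => thetaHat n ω) atTop (𝓝 θ₀))
    -- asymptotic normality with symmetric positive definite asymptotic variance V
    (V : Matrix (Fin (p + 1) ⊕ Fin (p + 1)) (Fin (p + 1) ⊕ Fin (p + 1)) ℝ)
    (hV : V.PosDef)
    (hCLT : ∃ ν, IsCenteredGaussianLaw ν V ∧
      TendstoInDistribution P
        (fun n ω => Sum.elim (fun i => Real.sqrt n * (muHat n ω i - μ₀ i))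
          (fun i => Real.sqrt n * (thetaHat n ω i - θ₀ i))) ν)
    -- the coordinatewise mean-variance functions κ and the derivative matrix K
    (κ : Fin (p + 1) → ℝ → ℝ) (hκmeas : ∀ i, Measurable (κ i))
    (hκdiff : ∀ i, ∃ s : Set ℝ, IsOpen s ∧ μ₀ i ∈ s ∧ ContDiffOn ℝ 1 (κ i) s)
    (K : Matrix (Fin (p + 1)) (Fin (p + 1)) ℝ)
    (hK : K = Matrix.diagonal fun i => deriv (κ i) (μ₀ i))
    (hKns : IsUnit K.det)
    (W : Matrix (Fin (p + 1)) (Fin (p + 1)) ℝ)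
    (hW : W = K * V.toBlocks₁₁ * K - K * V.toBlocks₁₂ - V.toBlocks₂₁ * K + V.toBlocks₂₂)
    -- consistent estimator of W
    (What : ℕ → Ω → Matrix (Fin (p + 1)) (Fin (p + 1)) ℝ)
    (hWhatMeas : ∀ n i j, Measurable fun ω => What n ω i j)
    (hWhatCons : ∀ i j, ∀ ε : ℝ, 0 < ε →
      Tendsto (fun n => P {ω | ε ≤ |What n ω i j - W i j|}) atTop (𝓝 0))
    -- the alternative hypothesis
    (halt : ¬ ∀ i, θ₀ i = κ i (μ₀ i))
    -- the test statistic
    (T : ℕ → Ω → ℝ)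
    (hT : ∀ n ω, T n ω = (n : ℝ) *
      ((fun i => κ i (muHat n ω i) - thetaHat n ω i) ⬝ᵥ
        ((What n ω)⁻¹ *ᵥ fun i => κ i (muHat n ω i) - thetaHat n ω i))) :
    ∀ c : ℝ, Tendsto (fun n => P {ω | c ≤ T n ω}) atTop (𝓝 1) := by
  classical
  intro c
  set d : Fin (p + 1) → ℝ := fun i => κ i (μ₀ i) - θ₀ i with hd
  have hdne : d ≠ 0 := by
    intro h
    apply halt
    intro i
    have := congrFun h i
    simp only [hd, Pi.zero_apply] at this
    linarith
  have hKsymm : Kᵀ = K := by rw [hK, diagonal_transpose]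
  have hWpd : W.PosDef := by rw [hW]; exact aux_W_posdef V hV K hKsymm
  have hWinv : W⁻¹.PosDef := hWpd.inv
  set q : ℝ := d ⬝ᵥ (W⁻¹ *ᵥ d) with hq
  have hqpos : 0 < q := by
    have := hWinv.dotProduct_mulVec_pos hdne
    simpa [hq] using this
  -- continuity of the quadratic form
  set g : ((Fin (p + 1) → ℝ) × (Fin (p + 1) → Fin (p + 1) → ℝ)) → ℝ :=
    fun x => x.1 ⬝ᵥ ((Matrix.of x.2)⁻¹ *ᵥ x.1) with hg
  set pt : ((Fin (p + 1) → ℝ) × (Fin (p + 1) → Fin (p + 1) → ℝ)) :=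
    (d, fun i j => W i j) with hpt
  have hofW : Matrix.of pt.2 = W := rfl
  have houter : Continuous (fun y : (Fin (p + 1) → ℝ) × Matrix (Fin (p + 1)) (Fin (p + 1)) ℝ =>
      y.1 ⬝ᵥ (y.2 *ᵥ y.1)) := by
    simp only [dotProduct, mulVec, dotProduct]
    refine continuous_finset_sum _ fun i _ => ?_
    refine ((continuous_apply i).comp continuous_fst).mul ?_
    refine continuous_finset_sum _ fun j _ => ?_
    exact (((continuous_apply j).comp ((continuous_apply i).comp continuous_snd))).mul
      ((continuous_apply j).comp continuous_fst)
  have hinv : ContinuousAt (Inv.inv : Matrix (Fin (p + 1)) (Fin (p + 1)) ℝ → _)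
      (Matrix.of pt.2) := by
    apply continuousAt_matrix_inv
    rw [Ring.inverse_eq_inv']
    exact continuousAt_inv₀ (hofW ▸ hWpd.det_pos.ne')
  have hpair : ContinuousAt
      (fun x : ((Fin (p + 1) → ℝ) × (Fin (p + 1) → Fin (p + 1) → ℝ)) =>
        (x.1, (Matrix.of x.2)⁻¹)) pt := by
    refine continuousAt_fst.prodMk (ContinuousAt.comp hinv ?_)
    exact Continuous.continuousAt continuous_snd
  have hgc : ContinuousAt g pt := by
    have h := ContinuousAt.comp
      (f := fun x : ((Fin (p + 1) → ℝ) × (Fin (p + 1) → Fin (p + 1) → ℝ)) =>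
        (x.1, (Matrix.of x.2)⁻¹)) houter.continuousAt hpair
    exact h
  have hgpt : g pt = q := by rw [hg, hq]; rfl
  obtain ⟨δ, hδpos, hδ⟩ := Metric.continuousAt_iff.mp hgc (q / 2) (by positivity)
  -- events
  set Av : ℕ → Fin (p + 1) → Set Ω :=
    fun n i => {ω | δ ≤ |(κ i (muHat n ω i) - thetaHat n ω i) - d i|} with hAv
  set Aw : ℕ → Fin (p + 1) → Fin (p + 1) → Set Ω :=
    fun n i j => {ω | δ ≤ |What n ω i j - W i j|} with hAw
  set B : ℕ → Set Ω := fun n => (⋃ i, Av n i) ∪ ⋃ i, ⋃ j, Aw n i j with hB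
  have hvmeas : ∀ n i, Measurable (fun ω => κ i (muHat n ω i) - thetaHat n ω i) :=
    fun n i => ((hκmeas i).comp ((measurable_pi_apply i).comp (hmuMeas n))).sub
      ((measurable_pi_apply i).comp (hthetaMeas n))
  have hBmeas : ∀ n, MeasurableSet (B n) := by
    intro n
    refine (MeasurableSet.iUnion fun i => ?_).union (MeasurableSet.iUnion fun i =>
      MeasurableSet.iUnion fun j => ?_)
    · exact measurableSet_le measurable_const ((hvmeas n i).sub measurable_const).abs
    · exact measurableSet_le measurable_const ((hWhatMeas n i j).sub measurable_const).abs
  have hκcont : ∀ i, ContinuousAt (κ i) (μ₀ i) := by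
    intro i
    obtain ⟨s, hso, hsm, hsd⟩ := hκdiff i
    exact (hsd.continuousOn).continuousAt (hso.mem_nhds hsm)
  have hvim : ∀ i, Tendsto (fun n => P (Av n i)) atTop (𝓝 0) := by
    intro i
    have hae : ∀ᵐ ω ∂P, Tendsto (fun n => κ i (muHat n ω i) - thetaHat n ω i)
        atTop (𝓝 (d i)) := by
      filter_upwards [hcons] with ω hω
      have h1 : Tendsto (fun n => muHat n ω i) atTop (𝓝 (μ₀ i)) := tendsto_pi_nhds.1 hω.1 i
      have h2 : Tendsto (fun n => thetaHat n ω i) atTop (𝓝 (θ₀ i)) := tendsto_pi_nhds.1 hω.2 i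
      exact (((hκcont i).tendsto).comp h1).sub h2
    have := tendstoInMeasure_of_tendsto_ae
      (f := fun n ω => κ i (muHat n ω i) - thetaHat n ω i) (g := fun _ => d i) (μ := P)
      (fun n => (hvmeas n i).aestronglyMeasurable) hae (ENNReal.ofReal δ) (ENNReal.ofReal_pos.2 hδpos)
    simpa only [hAv, edist_dist, ENNReal.ofReal_le_ofReal_iff dist_nonneg, Real.dist_eq, ENNReal.ofReal_le_ofReal_iff (abs_nonneg _)] using this
  have hwim : ∀ i j, Tendsto (fun n => P (Aw n i j)) atTop (𝓝 0) :=
    fun i j => hWhatCons i j δ hδpos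
  have hB0 : Tendsto (fun n => P (B n)) atTop (𝓝 0) := by
    have hub : Tendsto (fun n => (∑ i, P (Av n i)) + ∑ i, ∑ j, P (Aw n i j)) atTop (𝓝 0) := by
      have h1 : Tendsto (fun n => ∑ i, P (Av n i)) atTop (𝓝 0) := by
        have := tendsto_finset_sum (Finset.univ : Finset (Fin (p + 1)))
          (fun i _ => hvim i)
        simpa using this
      have h2 : Tendsto (fun n => ∑ i, ∑ j, P (Aw n i j)) atTop (𝓝 0) := by
        have := tendsto_finset_sum (Finset.univ : Finset (Fin (p + 1)))
          (fun i _ => tendsto_finset_sum (Finset.univ : Finset (Fin (p + 1)))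
            (fun j _ => hwim i j))
        simpa using this
      simpa using h1.add h2
    refine tendsto_of_tendsto_of_tendsto_of_le_of_le tendsto_const_nhds hub
      (fun n => zero_le) (fun n => ?_)
    refine (measure_union_le _ _).trans (add_le_add ?_ ?_)
    · exact measure_iUnion_fintype_le P _
    · exact (measure_iUnion_fintype_le P _).trans
        (Finset.sum_le_sum fun i _ => measure_iUnion_fintype_le P _)
  -- the key inclusion
  obtain ⟨N₀, hN₀⟩ := exists_nat_ge (2 * c / q)
  have hincl : ∀ n, N₀ ≤ n → (B n)ᶜ ⊆ {ω | c ≤ T n ω} := by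
    intro n hn ω hω
    simp only [hB, Set.compl_union, Set.mem_inter_iff, Set.compl_iUnion,
      Set.mem_iInter, Set.mem_compl_iff, hAv, hAw, Set.mem_setOf_eq, not_le] at hω
    set x : ((Fin (p + 1) → ℝ) × (Fin (p + 1) → Fin (p + 1) → ℝ)) :=
      (fun i => κ i (muHat n ω i) - thetaHat n ω i, fun i j => What n ω i j) with hx
    have hdist : dist x pt < δ := by
      rw [Prod.dist_eq]
      refine max_lt ?_ ?_
      · exact (dist_pi_lt_iff hδpos).2 fun i => by
          rw [Real.dist_eq]; exact hω.1 i
      · exact (dist_pi_lt_iff hδpos).2 fun i => (dist_pi_lt_iff hδpos).2 fun j => by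
          rw [Real.dist_eq]; exact hω.2 i j
    have hgx : q / 2 < g x := by
      have := hδ hdist
      rw [hgpt, Real.dist_eq, abs_lt] at this
      linarith [this.1]
    have hTx : T n ω = (n : ℝ) * g x := hT n ω
    have hnc : c ≤ (n : ℝ) * (q / 2) := by
      have h1 : 2 * c / q ≤ (n : ℝ) := hN₀.trans (Nat.cast_le.2 hn)
      rw [div_le_iff₀ hqpos] at h1
      nlinarith
    have : (n : ℝ) * (q / 2) ≤ (n : ℝ) * g x :=
      mul_le_mul_of_nonneg_left hgx.le (Nat.cast_nonneg n)
    simp only [Set.mem_setOf_eq, hTx]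
    linarith
  -- conclusion
  have hlow : Tendsto (fun n => 1 - P (B n)) atTop (𝓝 1) := by
    have := ENNReal.Tendsto.sub
      (tendsto_const_nhds : Tendsto (fun _ : ℕ => (1 : ENNReal)) atTop (𝓝 1)) hB0
      (Or.inl ENNReal.one_ne_top)
    simpa using this
  refine tendsto_of_tendsto_of_tendsto_of_le_of_le' hlow tendsto_const_nhds ?_ ?_
  · filter_upwards [eventually_ge_atTop N₀] with n hn
    calc 1 - P (B n) = P (B n)ᶜ := (prob_compl_eq_one_sub (hBmeas n)).symm
      _ ≤ P {ω | c ≤ T n ω} := measure_mono (hincl n hn)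
  · exact Eventually.of_forall fun n => prob_le_one
end

section
/- Let (Ω, F, P) be a probability space, G ⊆ F a sub-σ-algebra, X an ℝ^k-valued G-measurable random vector and ξ an integrable real random variable with E[‖X‖²·|ξ|] < ∞. Suppose E[ξ | G] < 0 almost surely, and suppose that for s ∈ ℝ^k, sᵀX = 0 almost surely implies s = 0. Then the matrix M := E[ξ · X Xᵀ] satisfies sᵀ M s < 0 for every nonzero s ∈ ℝ^k; in particular M is nonsingular. -/
open MeasureTheory ProbabilityTheory Filter Topology Matrix

/-- Definiteness argument for the Hessian matrix in the M-estimation of the conditional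
variance parameter: if `X` is `G`-measurable, `E[ξ | G] < 0` a.s., `E[‖X‖²·|ξ|] < ∞`, and
`sᵀX = 0` a.s. implies `s = 0`, then `M := E[ξ · X Xᵀ]` is negative definite, in particular
nonsingular. -/
theorem stmt_11
    {Ω : Type*} (G : MeasurableSpace Ω) [m0 : MeasurableSpace Ω]
    (hG : G ≤ m0) (P : Measure Ω) [IsProbabilityMeasure P]
    (k : ℕ)
    (X : Ω → Fin k → ℝ) (hXmeas : Measurable[G] X)
    (ξ : Ω → ℝ) (hξmeas : Measurable ξ) (hξint : Integrable ξ P)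
    (hXξ : Integrable (fun ω => (∑ i, (X ω i) ^ 2) * |ξ ω|) P)
    (hneg : ∀ᵐ ω ∂P, (P[ξ | G]) ω < 0)
    (hnd : ∀ s : Fin k → ℝ, (∀ᵐ ω ∂P, (∑ i, s i * X ω i) = 0) → s = 0)
    (M : Matrix (Fin k) (Fin k) ℝ)
    (hM : ∀ i j, M i j = ∫ ω, ξ ω * X ω i * X ω j ∂P) :
    (∀ s : Fin k → ℝ, s ≠ 0 → s ⬝ᵥ (M *ᵥ s) < 0) ∧ IsUnit M.det := by
  have hXm : ∀ i, Measurable (fun ω => X ω i) :=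
    fun i => ((measurable_pi_apply i).comp hXmeas).mono hG le_rfl
  have hXmG : ∀ i, Measurable[G] (fun ω => X ω i) :=
    fun i => (measurable_pi_apply i).comp hXmeas
  -- integrability of ξ * X i * X j
  have hint_ij : ∀ i j, Integrable (fun ω => ξ ω * X ω i * X ω j) P := by
    intro i j
    refine Integrable.mono' hXξ ?_ ?_
    · exact ((hξmeas.mul (hXm i)).mul (hXm j)).aestronglyMeasurable
    · refine Eventually.of_forall fun ω => ?_
      have h1 : |X ω i * X ω j| ≤ ∑ l, (X ω l) ^ 2 := by
        have ha : X ω i ^ 2 ≤ ∑ l, (X ω l) ^ 2 :=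
          Finset.single_le_sum (fun l _ => sq_nonneg (X ω l)) (Finset.mem_univ i)
        have hb : X ω j ^ 2 ≤ ∑ l, (X ω l) ^ 2 :=
          Finset.single_le_sum (fun l _ => sq_nonneg (X ω l)) (Finset.mem_univ j)
        have h2 : |X ω i * X ω j| ≤ (X ω i ^ 2 + X ω j ^ 2) / 2 := by
          rw [abs_mul]
          nlinarith [sq_nonneg (|X ω i| - |X ω j|), sq_abs (X ω i), sq_abs (X ω j),
            abs_nonneg (X ω i), abs_nonneg (X ω j)]
        linarith
      calc ‖ξ ω * X ω i * X ω j‖ = |X ω i * X ω j| * |ξ ω| := by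
            simp only [Real.norm_eq_abs, abs_mul]; ring
        _ ≤ (∑ l, (X ω l) ^ 2) * |ξ ω| :=
            mul_le_mul_of_nonneg_right h1 (abs_nonneg _)
  have key : ∀ s : Fin k → ℝ, s ≠ 0 → s ⬝ᵥ (M *ᵥ s) < 0 := by
    intro s hs
    set Y : Ω → ℝ := fun ω => ∑ i, s i * X ω i with hY
    have hYmG : Measurable[G] Y := by
      apply Finset.measurable_sum
      exact fun i _ => (measurable_const.mul (hXmG i))
    have hYm : Measurable Y := hYmG.mono hG le_rfl
    -- integrability of Y^2 * ξ
    have hintY : Integrable (fun ω => Y ω ^ 2 * ξ ω) P := by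
      refine Integrable.mono' (hXξ.const_mul (∑ i, s i ^ 2)) ?_ ?_
      · exact ((hYm.pow_const 2).mul hξmeas).aestronglyMeasurable
      · refine Eventually.of_forall fun ω => ?_
        have hcs : Y ω ^ 2 ≤ (∑ i, s i ^ 2) * (∑ i, (X ω i) ^ 2) :=
          Finset.sum_mul_sq_le_sq_mul_sq _ _ _
        calc ‖Y ω ^ 2 * ξ ω‖ = Y ω ^ 2 * |ξ ω| := by
              rw [Real.norm_eq_abs, abs_mul, abs_pow, sq_abs]
          _ ≤ ((∑ i, s i ^ 2) * (∑ i, (X ω i) ^ 2)) * |ξ ω| :=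
              mul_le_mul_of_nonneg_right hcs (abs_nonneg _)
          _ = (∑ i, s i ^ 2) * ((∑ i, (X ω i) ^ 2) * |ξ ω|) := by ring
    -- step 1: quadratic form equals the integral of Y^2 * ξ
    have hquad : s ⬝ᵥ (M *ᵥ s) = ∫ ω, Y ω ^ 2 * ξ ω ∂P := by
      have : ∀ i j, s i * M i j * s j = ∫ ω, s i * s j * (ξ ω * X ω i * X ω j) ∂P := by
        intro i j
        rw [hM i j, integral_const_mul]
        ring
      simp only [dotProduct, Matrix.mulVec, dotProduct, Finset.mul_sum, Finset.sum_mul]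
      calc (∑ i, ∑ j, s i * (M i j * s j))
          = ∑ i, ∑ j, ∫ ω, s i * s j * (ξ ω * X ω i * X ω j) ∂P := by
            refine Finset.sum_congr rfl fun i _ => Finset.sum_congr rfl fun j _ => ?_
            rw [← mul_assoc]; exact this i j
        _ = ∑ i, ∫ ω, ∑ j, s i * s j * (ξ ω * X ω i * X ω j) ∂P :=
            Finset.sum_congr rfl fun i _ =>
              (integral_finset_sum _ fun j _ => (hint_ij i j).const_mul _).symm
        _ = ∫ ω, ∑ i, ∑ j, s i * s j * (ξ ω * X ω i * X ω j) ∂P :=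
            (integral_finset_sum _ fun i _ =>
              integrable_finset_sum _ fun j _ => (hint_ij i j).const_mul _).symm
        _ = ∫ ω, Y ω ^ 2 * ξ ω ∂P := by
            refine integral_congr_ae (Eventually.of_forall fun ω => ?_)
            simp only [hY, sq, Finset.sum_mul, Finset.mul_sum]
            refine Finset.sum_congr rfl fun i _ => Finset.sum_congr rfl fun j _ => ?_
            ring
    -- step 2: tower property
    have hpull : P[fun ω => Y ω ^ 2 * ξ ω|G] =ᵐ[P] fun ω => Y ω ^ 2 * (P[ξ|G]) ω :=
      condExp_mul_of_stronglyMeasurable_left ((hYmG.pow_const 2).stronglyMeasurable) hintY hξint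
    have htower : ∫ ω, Y ω ^ 2 * ξ ω ∂P = ∫ ω, Y ω ^ 2 * (P[ξ|G]) ω ∂P := by
      rw [← integral_condExp hG]
      exact integral_congr_ae hpull
    -- step 3: the integral is negative
    have hintg : Integrable (fun ω => Y ω ^ 2 * (P[ξ|G]) ω) P :=
      (integrable_condExp).congr hpull
    have hYne : 0 < P {ω | Y ω ≠ 0} := by
      by_contra h
      push_neg at h
      have : ∀ᵐ ω ∂P, Y ω = 0 := by
        rw [ae_iff]
        simpa using le_antisymm h zero_le
      exact hs (hnd s this)
    have hpos : 0 < ∫ ω, - (Y ω ^ 2 * (P[ξ|G]) ω) ∂P := by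
      rw [integral_pos_iff_support_of_nonneg_ae]
      · refine lt_of_lt_of_le hYne (measure_mono_ae ?_)
        filter_upwards [hneg] with ω hω hYω
        have hY0 : Y ω ≠ 0 := hYω
        have hY2 : (0:ℝ) < Y ω ^ 2 := by positivity
        exact (neg_pos.mpr (mul_neg_of_pos_of_neg hY2 hω)).ne'
      · filter_upwards [hneg] with ω hω
        have : Y ω ^ 2 * (P[ξ|G]) ω ≤ 0 :=
          mul_nonpos_of_nonneg_of_nonpos (sq_nonneg _) hω.le
        simpa using this
      · exact hintg.neg
    rw [hquad, htower]
    rw [integral_neg] at hpos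
    linarith
  refine ⟨key, ?_⟩
  rw [isUnit_iff_ne_zero]
  intro hdet
  obtain ⟨v, hv, hMv⟩ := (Matrix.exists_mulVec_eq_zero_iff).mpr hdet
  have := key v hv
  rw [hMv] at this
  simp at this
end
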